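/- arXiv:1902.11185 — 4 statements merged into one kernel-verified Lean document; each statement's English description precedes it below -/
import Mathlib

section
/- Let n, h, f be integers with n ≥ 4 and h ≥ 0. If the cubic polynomial q(t) = t^3 + (1-n)·t^2 + (h+1-n)·t + (h+1-f) ∈ ℝ[t] has all of its roots real, then 27·f ≤ (n+2)^3. -/
open Polynomial

lemma amgm_aux (x y z s p : ℝ) (hxs : x + y + z = s) (hp : x*y + y*z + z*x = p)
    (hs : 0 < s) (hp0 : 0 < p) : 27 * (x*y*z) ≤ s^3 := by
  rcases le_or_gt (x*y*z) 0 with hxyz|hxyz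
  · nlinarith [pow_pos hs 3]
  · have keyx : x^3 - s*x^2 + p*x - x*y*z = 0 := by rw [← hxs, ← hp]; ring
    have keyy : y^3 - s*y^2 + p*y - x*y*z = 0 := by rw [← hxs, ← hp]; ring
    have keyz : z^3 - s*z^2 + p*z - x*y*z = 0 := by rw [← hxs, ← hp]; ring
    have hx : 0 < x := by
      by_contra h'; push_neg at h'
      nlinarith [mul_nonneg hs.le (sq_nonneg x), mul_nonpos_of_nonneg_of_nonpos hp0.le h',
        mul_nonpos_of_nonpos_of_nonneg h' (sq_nonneg x)]
    have hy : 0 < y := by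
      by_contra h'; push_neg at h'
      nlinarith [mul_nonneg hs.le (sq_nonneg y), mul_nonpos_of_nonneg_of_nonpos hp0.le h',
        mul_nonpos_of_nonpos_of_nonneg h' (sq_nonneg y)]
    have hz : 0 < z := by
      by_contra h'; push_neg at h'
      nlinarith [mul_nonneg hs.le (sq_nonneg z), mul_nonpos_of_nonneg_of_nonpos hp0.le h',
        mul_nonpos_of_nonpos_of_nonneg h' (sq_nonneg z)]
    rw [← hxs]
    nlinarith [mul_nonneg hz.le (sq_nonneg (x-y)), mul_nonneg hx.le (sq_nonneg (y-z)),
      mul_nonneg hy.le (sq_nonneg (x-z)), mul_pos (mul_pos hx hy) hz]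

/-- Corollary 2(i): if `n ≥ 4`, `h ≥ 0` and the cubic
`q(t) = t^3 + (1-n)t^2 + (h+1-n)t + (h+1-f)` has all roots real,
then `27f ≤ (n+2)^3`. -/
theorem stmt_2 (n h f : ℤ) (hn : 4 ≤ n) (hh : 0 ≤ h)
    (q : Polynomial ℝ)
    (hq : q = X ^ 3 + C (1 - (n : ℝ)) * X ^ 2 + C ((h : ℝ) + 1 - (n : ℝ)) * X
      + C ((h : ℝ) + 1 - (f : ℝ)))
    (hroots : ∀ z : ℂ, aeval z q = 0 → z.im = 0) :
    27 * f ≤ (n + 2) ^ 3 := by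
  have hmonic : q.Monic := by rw [hq]; monicity!
  have hdeg : q.natDegree = 3 := by rw [hq]; compute_degree!
  set Q := q.map (algebraMap ℝ ℂ) with hQ
  have hQm : Q.Monic := hmonic.map _
  have hQdeg : Q.natDegree = 3 := by rw [hQ, hmonic.natDegree_map, hdeg]
  have hsplit : Q.Splits := IsAlgClosed.splits _
  have hcard : Q.roots.card = 3 := by
    rw [splits_iff_card_roots.mp hsplit, hQdeg]
  obtain ⟨a, b, c, habc⟩ := Multiset.card_eq_three.mp hcard
  have hfact : Q = (X - C a) * ((X - C b) * (X - C c)) := by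
    conv_lhs => rw [hsplit.eq_prod_roots_of_monic hQm, habc]
    simp
  have him : ∀ z ∈ Q.roots, z.im = 0 := by
    intro z hz
    apply hroots
    have := isRoot_of_mem_roots hz
    rwa [hQ, IsRoot, eval_map, ← aeval_def] at this
  have ha : a = (a.re : ℂ) := by
    have := him a (by rw [habc]; simp)
    exact Complex.ext rfl (by simp [this])
  have hb : b = (b.re : ℂ) := by
    have := him b (by rw [habc]; simp)
    exact Complex.ext rfl (by simp [this])
  have hc : c = (c.re : ℂ) := by
    have := him c (by rw [habc]; simp)
    exact Complex.ext rfl (by simp [this])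
  set A := a.re; set B := b.re; set Cr := c.re
  have key : ∀ t : ℝ, (t - A) * ((t - B) * (t - Cr))
      = t^3 + (1-(n:ℝ))*t^2 + ((h:ℝ)+1-(n:ℝ))*t + ((h:ℝ)+1-(f:ℝ)) := by
    intro t
    have e1 := congrArg (eval (t : ℂ)) hfact
    rw [hQ, eval_map, ← aeval_def, hq] at e1
    rw [ha, hb, hc] at e1
    simp at e1
    exact_mod_cast e1.symm
  have k0 := key 0
  have k1 := key 1
  have km1 := key (-1)
  have hA : A + B + Cr = (n : ℝ) - 1 := by linear_combination k0 - (1/2 : ℝ) * k1 - (1/2 : ℝ) * km1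
  have hB : A*B + B*Cr + Cr*A = (h:ℝ) + 1 - n := by linear_combination (1/2 : ℝ) * k1 - (1/2 : ℝ) * km1
  have hC : A*B*Cr = (f:ℝ) - h - 1 := by linear_combination -k0
  have hn' : (4:ℝ) ≤ (n:ℝ) := by exact_mod_cast hn
  have hh' : (0:ℝ) ≤ (h:ℝ) := by exact_mod_cast hh
  have final : 27 * ((1+A) * ((1+B) * (1+Cr))) ≤ ((n:ℝ)+2)^3 := by
    have := amgm_aux (1+A) (1+B) (1+Cr) ((n:ℝ)+2) ((h:ℝ)+(n:ℝ)+2)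
      (by linarith) (by linear_combination hB + 2*hA) (by linarith [hn', hh'])
      (by linarith [hn', hh'])
    linarith [this]
  have : (27 : ℝ) * f ≤ ((n:ℝ)+2)^3 := by
    have hf : (f : ℝ) = (1+A) * ((1+B) * (1+Cr)) := by linear_combination -hA - hB - hC
    rw [hf]; exact final
  exact_mod_cast this
end

section
/- Fix a real number n ≥ 4 and define φ_n(x) := (9n+18)·x + 20 + 12n + 2·√((n^2+n-2-3x)^3) - 2n^3 - 3n^2, where √ denotes the real square root. Then for every real x with 0 < x ≤ (n^2+n-2)/3 one has φ_n(x) ≤ (n+2)^3, and φ_n attains this value at x̄ = (n^2+n-2)/3, i.e. φ_n(x̄) = (n+2)^3. -/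
/-- Maximization lemma for Corollary 2(i): for fixed real `n ≥ 4`, the function
`φ_n(x) = (9n+18)x + 20 + 12n + 2√((n^2+n-2-3x)^3) - 2n^3 - 3n^2` satisfies
`φ_n(x) ≤ (n+2)^3` for `0 < x ≤ (n^2+n-2)/3`, with equality at the right
endpoint `x̄ = (n^2+n-2)/3`. -/
theorem stmt_3 (n : ℝ) (hn : 4 ≤ n) (φ : ℝ → ℝ)
    (hφ : ∀ x, φ x = (9 * n + 18) * x + 20 + 12 * n
      + 2 * Real.sqrt ((n ^ 2 + n - 2 - 3 * x) ^ 3) - 2 * n ^ 3 - 3 * n ^ 2) :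
    (∀ x : ℝ, 0 < x → x ≤ (n ^ 2 + n - 2) / 3 → φ x ≤ (n + 2) ^ 3) ∧
      φ ((n ^ 2 + n - 2) / 3) = (n + 2) ^ 3 := by
  constructor
  · intro x hx0 hx
    set t : ℝ := n ^ 2 + n - 2 - 3 * x with ht
    have ht0 : 0 ≤ t := by nlinarith
    have hsq : Real.sqrt (t ^ 3) = t * Real.sqrt t := by
      have : t ^ 3 = t ^ 2 * t := by ring
      rw [this, Real.sqrt_mul (sq_nonneg t), Real.sqrt_sq ht0]
    rw [hφ, ← ht, hsq]
    have hbound : Real.sqrt t ≤ 3 * (n + 2) / 2 := by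
      have h1 : t ≤ (3 * (n + 2) / 2) ^ 2 := by nlinarith
      calc Real.sqrt t ≤ Real.sqrt ((3 * (n + 2) / 2) ^ 2) := Real.sqrt_le_sqrt h1
        _ = 3 * (n + 2) / 2 := Real.sqrt_sq (by linarith)
    nlinarith [mul_le_mul_of_nonneg_left hbound ht0]
  · rw [hφ]
    have : n ^ 2 + n - 2 - 3 * ((n ^ 2 + n - 2) / 3) = 0 := by ring
    rw [this]
    norm_num [Real.sqrt_zero]
    ring
end

section
/- Let n, h, S be integers with n ≥ 4, h ≥ 0, and set D := n^2 + n - 2 - 3h and f := S - n. If the cubic polynomial q(t) = t^3 + (1-n)·t^2 + (h+1-n)·t + (h+1-f) ∈ ℝ[t] has all of its roots real, then (i) 27·S ≤ (n+2)^3 + 27n, (ii) 27·S ≤ (9n+18)h + 20 + 39n - 2n^3 - 3n^2 + 2·√(D^3), and (iii) 27·S ≥ (9n+18)h + 20 + 39n - 2n^3 - 3n^2 - 2·√(D^3), where √ denotes the real square root. -/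
open Polynomial

set_option maxHeartbeats 1000000

/-- Corollary 3, arithmetic content: with `n ≥ 4`, `h ≥ 0`,
`D := n^2+n-2-3h` and `f := S - n`, if the cubic
`q(t) = t^3 + (1-n)t^2 + (h+1-n)t + (h+1-f)` has all roots real, then
`27S ≤ (n+2)^3 + 27n`, together with the displayed upper and lower bounds. -/
theorem stmt_6 (n h S : ℤ) (hn : 4 ≤ n) (hh : 0 ≤ h)
    (D f : ℤ) (hD : D = n ^ 2 + n - 2 - 3 * h) (hf : f = S - n)
    (q : Polynomial ℝ)
    (hq : q = X ^ 3 + C (1 - (n : ℝ)) * X ^ 2 + C ((h : ℝ) + 1 - (n : ℝ)) * X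
      + C ((h : ℝ) + 1 - (f : ℝ)))
    (hroots : ∀ z : ℂ, aeval z q = 0 → z.im = 0) :
    27 * S ≤ (n + 2) ^ 3 + 27 * n ∧
      (27 * S : ℝ) ≤ (9 * n + 18) * h + 20 + 39 * n - 2 * n ^ 3 - 3 * n ^ 2
        + 2 * Real.sqrt ((D : ℝ) ^ 3) ∧
      (27 * S : ℝ) ≥ (9 * n + 18) * h + 20 + 39 * n - 2 * n ^ 3 - 3 * n ^ 2
        - 2 * Real.sqrt ((D : ℝ) ^ 3) := by
  -- abbreviations for the coefficients
  set a : ℝ := 1 - (n : ℝ) with ha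
  set b : ℝ := (h : ℝ) + 1 - (n : ℝ) with hb
  set c : ℝ := (h : ℝ) + 1 - (f : ℝ) with hc
  -- the complex version of q
  set Q : Polynomial ℂ := q.map (algebraMap ℝ ℂ) with hQdef
  have hqmonic : q.Monic := by
    rw [hq]; monicity!
  have hqdeg : q.natDegree = 3 := by
    rw [hq]; compute_degree!
  have hQmonic : Q.Monic := hqmonic.map _
  have hQdeg : Q.natDegree = 3 := by
    rw [hQdef, natDegree_map, hqdeg]
  have hsplits : Splits Q := IsAlgClosed.splits Q
  have hcard : Multiset.card Q.roots = 3 := by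
    rw [splits_iff_card_roots.mp hsplits, hQdeg]
  obtain ⟨z1, z2, z3, hz⟩ := Multiset.card_eq_three.mp hcard
  have hfact : Q = (X - C z1) * (X - C z2) * (X - C z3) := by
    have := hsplits.eq_prod_roots_of_monic hQmonic
    rw [hz] at this
    simpa [Multiset.map_cons, mul_assoc] using this
  -- evaluation of Q
  have hevalQ : ∀ z : ℂ,
      z ^ 3 + (a : ℂ) * z ^ 2 + (b : ℂ) * z + (c : ℂ)
        = (z - z1) * (z - z2) * (z - z3) := by
    intro z
    have h1 : eval z Q = (z - z1) * (z - z2) * (z - z3) := by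
      rw [hfact]; simp
    have h2 : eval z Q = z ^ 3 + (a : ℂ) * z ^ 2 + (b : ℂ) * z + (c : ℂ) := by
      rw [hQdef, hq]
      simp [Polynomial.eval_map, Polynomial.eval₂_add, Polynomial.eval₂_mul]
    rw [← h2, h1]
  -- the roots are real
  have hreal : ∀ z : ℂ, z ∈ Q.roots → z.im = 0 := by
    intro z hzmem
    apply hroots
    have : IsRoot Q z := isRoot_of_mem_roots hzmem
    rw [Polynomial.aeval_def, ← Polynomial.eval_map]
    exact this
  have hz1 : z1.im = 0 := hreal z1 (by rw [hz]; simp)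
  have hz2 : z2.im = 0 := hreal z2 (by rw [hz]; simp)
  have hz3 : z3.im = 0 := hreal z3 (by rw [hz]; simp)
  set x1 : ℝ := z1.re with hx1
  set x2 : ℝ := z2.re with hx2
  set x3 : ℝ := z3.re with hx3
  have hz1' : z1 = (x1 : ℂ) := Complex.ext rfl (by simp [hz1])
  have hz2' : z2 = (x2 : ℂ) := Complex.ext rfl (by simp [hz2])
  have hz3' : z3 = (x3 : ℂ) := Complex.ext rfl (by simp [hz3])
  -- real functional equation
  have hevalR : ∀ t : ℝ,
      t ^ 3 + a * t ^ 2 + b * t + c = (t - x1) * (t - x2) * (t - x3) := by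
    intro t
    have := hevalQ (t : ℂ)
    rw [hz1', hz2', hz3'] at this
    exact_mod_cast this
  -- Vieta's relations
  have e0 := hevalR 0
  have e1 := hevalR 1
  have e2 := hevalR (-1)
  have v1 : a = -(x1 + x2 + x3) := by linear_combination e1 / 2 + e2 / 2 - e0
  have v2 : b = x1 * x2 + x1 * x3 + x2 * x3 := by linear_combination e1 / 2 - e2 / 2
  have v3 : c = -(x1 * x2 * x3) := by linear_combination e0
  -- discriminant inequality
  have hkey : (2 * a ^ 3 - 9 * a * b + 27 * c) ^ 2 ≤ 4 * (a ^ 2 - 3 * b) ^ 3 := by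
    have hid : 4 * (a ^ 2 - 3 * b) ^ 3 - (2 * a ^ 3 - 9 * a * b + 27 * c) ^ 2
        = 27 * ((x1 - x2) * (x2 - x3) * (x1 - x3)) ^ 2 := by
      rw [v1, v2, v3]; ring
    nlinarith [sq_nonneg ((x1 - x2) * (x2 - x3) * (x1 - x3))]
  -- translate to D and the linear expression
  have hDr : (D : ℝ) = a ^ 2 - 3 * b := by
    rw [hD, ha, hb]; push_cast; ring
  have hu : 2 * a ^ 3 - 9 * a * b + 27 * c
      = ((9 * n + 18) * h + 20 + 39 * n - 2 * n ^ 3 - 3 * n ^ 2 - 27 * S : ℝ) := by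
    rw [ha, hb, hc, hf]; push_cast; ring
  set R : ℝ := (9 * n + 18) * h + 20 + 39 * n - 2 * n ^ 3 - 3 * n ^ 2 with hR
  have hkey' : (R - 27 * S) ^ 2 ≤ 4 * (D : ℝ) ^ 3 := by
    rw [hu, ← hDr] at hkey
    exact hkey
  have hD3 : (0 : ℝ) ≤ (D : ℝ) ^ 3 := by nlinarith [sq_nonneg (R - 27 * (S : ℝ))]
  have hDpos : (0 : ℝ) ≤ (D : ℝ) := by
    by_contra hneg
    push_neg at hneg
    have := pow_pos (neg_pos.2 hneg) 3
    nlinarith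
  have hsq : (2 * Real.sqrt ((D : ℝ) ^ 3)) ^ 2 = 4 * (D : ℝ) ^ 3 := by
    rw [mul_pow, Real.sq_sqrt hD3]; ring
  have habs : |R - 27 * (S : ℝ)| ≤ 2 * Real.sqrt ((D : ℝ) ^ 3) := by
    have h4 : Real.sqrt 4 = 2 := by
      rw [show (4 : ℝ) = 2 ^ 2 by norm_num, Real.sqrt_sq (by norm_num : (0:ℝ) ≤ 2)]
    calc |R - 27 * (S : ℝ)| = Real.sqrt ((R - 27 * (S : ℝ)) ^ 2) :=
          (Real.sqrt_sq_eq_abs _).symm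
      _ ≤ Real.sqrt (4 * (D : ℝ) ^ 3) := Real.sqrt_le_sqrt hkey'
      _ = 2 * Real.sqrt ((D : ℝ) ^ 3) := by
          rw [Real.sqrt_mul (by norm_num : (0:ℝ) ≤ 4), h4]
  have hub : (27 * S : ℝ) ≤ R + 2 * Real.sqrt ((D : ℝ) ^ 3) := by
    have := abs_le.mp habs
    linarith [this.1]
  have hlb : (27 * S : ℝ) ≥ R - 2 * Real.sqrt ((D : ℝ) ^ 3) := by
    have := abs_le.mp habs
    linarith [this.2]
  refine ⟨?_, hub, hlb⟩
  -- part (i)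
  have hM : Real.sqrt ((D : ℝ) ^ 3) ≤ (D : ℝ) * ((3 * n + 6 : ℝ) / 2) := by
    have hDle : (D : ℝ) ≤ ((3 * n + 6 : ℝ) / 2) ^ 2 := by
      rw [hD]
      push_cast
      have : (4 : ℝ) ≤ (n : ℝ) := by exact_mod_cast hn
      have : (0 : ℝ) ≤ (h : ℝ) := by exact_mod_cast hh
      nlinarith
    have h3 : (D : ℝ) ^ 3 ≤ ((D : ℝ) * ((3 * n + 6 : ℝ) / 2)) ^ 2 := by
      have : (D : ℝ) ^ 3 = (D : ℝ) ^ 2 * (D : ℝ) := by ring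
      rw [this, mul_pow]
      exact mul_le_mul_of_nonneg_left hDle (sq_nonneg _)
    calc Real.sqrt ((D : ℝ) ^ 3) ≤ Real.sqrt (((D : ℝ) * ((3 * n + 6 : ℝ) / 2)) ^ 2) :=
          Real.sqrt_le_sqrt h3
      _ = (D : ℝ) * ((3 * n + 6 : ℝ) / 2) := by
          rw [Real.sqrt_sq]
          have : (4 : ℝ) ≤ (n : ℝ) := by exact_mod_cast hn
          positivity
  have hident : R + (3 * (n : ℝ) + 6) * (D : ℝ) = ((n : ℝ) + 2) ^ 3 + 27 * n := by
    rw [hR, hD]; push_cast; ring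
  have : (27 * S : ℝ) ≤ ((n : ℝ) + 2) ^ 3 + 27 * n := by
    calc (27 * S : ℝ) ≤ R + 2 * Real.sqrt ((D : ℝ) ^ 3) := hub
      _ ≤ R + (3 * (n : ℝ) + 6) * (D : ℝ) := by linarith [hM]
      _ = ((n : ℝ) + 2) ^ 3 + 27 * n := hident
  exact_mod_cast this
end

section
/- Let n, h2, f be integers with 0 ≤ h2 ≤ 2n - 2 and suppose 3 divides n^2 - n + h2; set h := (n^2 - n + h2)/3. If the cubic polynomial q(t) = t^3 + (1-n)·t^2 + (h+1-n)·t + (h+1-f) ∈ ℝ[t] has all of its roots real, then 27·f ≥ n^3 + 6n + 20 + 3·h2·(n+2) - 2·√((2n-2-h2)^3) and 27·f ≤ (n+2)^3, where √ denotes the real square root. -/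
open Polynomial

lemma key54 (x y z : ℝ) (hs : x + y + z = 0) :
    54 * (x * y * z) ^ 2 ≤ (x ^ 2 + y ^ 2 + z ^ 2) ^ 3 := by
  have hz : z = -x - y := by linarith
  subst hz
  nlinarith [sq_nonneg ((x - y) * (2 * x ^ 2 + 5 * x * y + 2 * y ^ 2)),
    sq_nonneg (x + y), sq_nonneg (x - y)]

set_option maxHeartbeats 1000000 in
/-- Inequality (5) of Theorem 3(i): with `0 ≤ h2 ≤ 2n-2`, `3 ∣ n^2 - n + h2`
and `h := (n^2 - n + h2)/3`, if the cubic
`q(t) = t^3 + (1-n)t^2 + (h+1-n)t + (h+1-f)` has all roots real, then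
`27f ≥ n^3 + 6n + 20 + 3h2(n+2) - 2√((2n-2-h2)^3)` and `27f ≤ (n+2)^3`. -/
theorem stmt_8 (n h2 f h : ℤ) (hh2 : 0 ≤ h2) (hh2' : h2 ≤ 2 * n - 2)
    (hdvd : 3 ∣ n ^ 2 - n + h2) (hh : h = (n ^ 2 - n + h2) / 3)
    (q : Polynomial ℝ)
    (hq : q = X ^ 3 + C (1 - (n : ℝ)) * X ^ 2 + C ((h : ℝ) + 1 - (n : ℝ)) * X
      + C ((h : ℝ) + 1 - (f : ℝ)))
    (hroots : ∀ z : ℂ, aeval z q = 0 → z.im = 0) :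
    (27 * f : ℝ) ≥ (n : ℝ) ^ 3 + 6 * n + 20 + 3 * h2 * (n + 2)
      - 2 * Real.sqrt ((2 * (n : ℝ) - 2 - h2) ^ 3) ∧
    27 * f ≤ (n + 2) ^ 3 := by
  -- integer facts
  have hn1 : (1 : ℤ) ≤ n := by omega
  have h3 : 3 * h = n ^ 2 - n + h2 := by rw [hh]; exact Int.mul_ediv_cancel' hdvd
  have h3c : (3 : ℝ) * (h : ℝ) = (n : ℝ) ^ 2 - n + h2 := by exact_mod_cast h3
  have hn1c : (1 : ℝ) ≤ (n : ℝ) := by exact_mod_cast hn1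
  have hh2c : (0 : ℝ) ≤ (h2 : ℝ) := by exact_mod_cast hh2
  have hh2c' : (h2 : ℝ) ≤ 2 * (n : ℝ) - 2 := by exact_mod_cast hh2'
  -- extract three real roots
  have hqm : q.Monic := by rw [hq]; monicity!
  have hdeg : q.natDegree = 3 := by rw [hq]; compute_degree!
  set qC := q.map (algebraMap ℝ ℂ) with hqC
  have hqCm : qC.Monic := hqm.map _
  have hqCdeg : qC.natDegree = 3 := by rw [hqC, natDegree_map]; exact hdeg
  have hsplit : qC.Splits := IsAlgClosed.splits _
  have hcard : qC.roots.card = 3 := by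
    rw [← hqCdeg]; exact (splits_iff_card_roots.mp hsplit)
  obtain ⟨A, B, CC, habc⟩ := Multiset.card_eq_three.mp hcard
  have hprod : qC = (X - C A) * ((X - C B) * (X - C CC)) := by
    have h1 := hsplit.eq_prod_roots_of_monic hqCm
    rw [habc] at h1
    simpa using h1
  have hne : qC ≠ 0 := hqCm.ne_zero
  have him : ∀ z ∈ qC.roots, z.im = 0 := by
    intro z hz
    have hz0 : eval z qC = 0 := (mem_roots hne).mp hz
    apply hroots
    rwa [aeval_def, ← eval_map]
  have hA : A.im = 0 := him A (by rw [habc]; simp)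
  have hB : B.im = 0 := him B (by rw [habc]; simp)
  have hC : CC.im = 0 := him CC (by rw [habc]; simp)
  obtain ⟨a, b, c, hfact⟩ : ∃ a b c : ℝ, q = (X - C a) * (X - C b) * (X - C c) := by
    refine ⟨A.re, B.re, CC.re, ?_⟩
    apply Polynomial.map_injective (algebraMap ℝ ℂ) (algebraMap ℝ ℂ).injective
    rw [← hqC, hprod]
    have haa : (A.re : ℂ) = A := Complex.ext rfl (by simp [hA])
    have hbb : (B.re : ℂ) = B := Complex.ext rfl (by simp [hB])
    have hcc : (CC.re : ℂ) = CC := Complex.ext rfl (by simp [hC])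
    simp [Polynomial.map_mul, Polynomial.map_sub, map_C, map_X, haa, hbb, hcc, mul_assoc]
  -- Vieta via evaluation
  have hfact' : X ^ 3 + C (1 - (n : ℝ)) * X ^ 2 + C ((h : ℝ) + 1 - (n : ℝ)) * X
      + C ((h : ℝ) + 1 - (f : ℝ)) = (X - C a) * (X - C b) * (X - C c) := by
    rw [← hq]; exact hfact
  have E : ∀ t : ℝ, t ^ 3 + (1 - (n : ℝ)) * t ^ 2 + ((h : ℝ) + 1 - n) * t
      + ((h : ℝ) + 1 - f) = (t - a) * (t - b) * (t - c) := by
    intro t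
    have := congrArg (eval t) hfact'
    simpa using this
  have hs1 : a + b + c = (n : ℝ) - 1 := by
    linear_combination -(E 0) + (E 1) / 2 + (E (-1)) / 2
  have hs2 : a * b + a * c + b * c = (h : ℝ) + 1 - n := by
    linear_combination -(E 1) / 2 + (E (-1)) / 2
  have hs3 : a * b * c = (f : ℝ) - h - 1 := by
    linear_combination E 0
  clear hq hfact hfact' E hqm hdeg hqCm hqCdeg hsplit hcard habc hprod hne him hA hB hC hroots hdvd hh hqC
  clear A B CC qC q
  -- shifted variables
  obtain ⟨D, hD⟩ : ∃ D : ℝ, D = 2 * (n : ℝ) - 2 - (h2 : ℝ) := ⟨_, rfl⟩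
  have hD0 : 0 ≤ D := by rw [hD]; linarith
  obtain ⟨m, hm⟩ : ∃ m : ℝ, m = ((n : ℝ) + 2) / 3 := ⟨_, rfl⟩
  obtain ⟨x, hx⟩ : ∃ x : ℝ, x = a + 1 - m := ⟨_, rfl⟩
  obtain ⟨y, hy⟩ : ∃ y : ℝ, y = b + 1 - m := ⟨_, rfl⟩
  obtain ⟨z, hz⟩ : ∃ z : ℝ, z = c + 1 - m := ⟨_, rfl⟩
  have hsum : x + y + z = 0 := by rw [hx, hy, hz, hm]; linarith
  have hQ : x ^ 2 + y ^ 2 + z ^ 2 = 2 * D / 3 := by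
    rw [hx, hy, hz, hm, hD]
    linear_combination (a + b + c + (n : ℝ) - 1 + 2 * (1 - ((n : ℝ) + 2) / 3)) * hs1
      - 2 * hs2 - (2 / 3) * h3c
  obtain ⟨P, hP⟩ : ∃ P : ℝ, P = x * y * z := ⟨_, rfl⟩
  have h27 : (27 : ℝ) * f = ((n : ℝ) + 2) ^ 3 - 3 * ((n : ℝ) + 2) * D + 27 * P := by
    rw [hP, hx, hy, hz, hm, hD]
    linear_combination (-27 : ℝ) * hs3 + (-9 * (1 - (n : ℝ))) * hs2
      + (-3 * (1 - (n : ℝ)) ^ 2) * hs1 + (3 * ((n : ℝ) + 2)) * h3c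
  have hkey : 54 * P ^ 2 ≤ (2 * D / 3) ^ 3 := by
    rw [← hQ, hP]; exact key54 x y z hsum
  obtain ⟨s, hsdef⟩ : ∃ s : ℝ, s = Real.sqrt (D ^ 3) := ⟨_, rfl⟩
  have hs0 : 0 ≤ s := hsdef ▸ Real.sqrt_nonneg _
  have hssq : s ^ 2 = D ^ 3 := by rw [hsdef]; exact Real.sq_sqrt (by positivity)
  have hP2 : (27 * P) ^ 2 ≤ 4 * s ^ 2 := by rw [hssq]; nlinarith [hkey]
  obtain ⟨hlow, hup⟩ : -(2 * s) ≤ 27 * P ∧ 27 * P ≤ 2 * s := by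
    have := abs_le_of_sq_le_sq' (by nlinarith [hP2] : (27 * P) ^ 2 ≤ (2 * s) ^ 2)
      (by linarith : (0:ℝ) ≤ 2 * s)
    exact this
  have h2s : 2 * s ≤ 3 * ((n : ℝ) + 2) * D := by
    have hDle : D ≤ 2 * (n : ℝ) - 2 := by rw [hD]; linarith
    have h94 : D ≤ 9 * ((n : ℝ) + 2) ^ 2 / 4 := by
      nlinarith [hn1c, hDle, sq_nonneg ((n : ℝ) - 1)]
    have hcube : D ^ 3 ≤ (3 * ((n : ℝ) + 2) * D / 2) ^ 2 := by
      nlinarith [mul_nonneg (mul_nonneg hD0 hD0) (sub_nonneg.mpr h94)]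
    have hnn : (0 : ℝ) ≤ 3 * ((n : ℝ) + 2) * D / 2 := by
      have := mul_nonneg (by linarith : (0 : ℝ) ≤ 3 * ((n : ℝ) + 2)) hD0
      linarith
    have hstep : s ≤ 3 * ((n : ℝ) + 2) * D / 2 := by
      rw [hsdef]
      calc Real.sqrt (D ^ 3) ≤ Real.sqrt ((3 * ((n : ℝ) + 2) * D / 2) ^ 2) :=
            Real.sqrt_le_sqrt hcube
        _ = 3 * ((n : ℝ) + 2) * D / 2 := Real.sqrt_sq hnn
    linarith
  constructor
  · have hid : ((n : ℝ) + 2) ^ 3 - 3 * ((n : ℝ) + 2) * D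
        = (n : ℝ) ^ 3 + 6 * n + 20 + 3 * h2 * (n + 2) := by rw [hD]; ring
    have : Real.sqrt ((2 * (n : ℝ) - 2 - h2) ^ 3) = s := by rw [hsdef, hD]
    rw [this]
    linarith [h27, hlow, hid]
  · have hreal : (27 : ℝ) * f ≤ ((n : ℝ) + 2) ^ 3 := by linarith [h27, hup, h2s]
    exact_mod_cast hreal
end
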